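/- Let q be a prime power, t ≥ 2, and P = ⟨(1,1)⟩_{F_q} ∈ PG(2t−1, q) (projective space of F_{q^t}²). For y ∈ F_{q^t} \ F_q and h, h′ ∈ {0, 1, …, t−1}, define Q_{y,h} = ⟨(y, y^{q^h})⟩_{F_q}. Then Q_{y,h} = Q_{y′,h′} if and only if ⟨y⟩_{F_q} = ⟨y′⟩_{F_q} and [F_q(y) : F_q] divides h − h′. -/

import Mathlib

open Polynomial IntermediateField

private lemma pow_q_mul {K : Type*} [Monoid K] {y : K} {Q a : ℕ} (hy : y ^ Q ^ a = y) :
    ∀ k : ℕ, y ^ Q ^ (a * k) = y := by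
  intro k
  induction k with
  | zero => simp
  | succ k ih =>
    have hQ : Q ^ (a * (k + 1)) = Q ^ (a * k) * Q ^ a := by
      rw [← pow_add]; ring_nf
    rw [hQ, pow_mul, ih, hy]

private lemma pow_q_gcd {K : Type*} [Monoid K] {y : K} {Q : ℕ} :
    ∀ a b : ℕ, y ^ Q ^ a = y → y ^ Q ^ b = y → y ^ Q ^ Nat.gcd a b = y := by
  intro a
  induction a using Nat.strong_induction_on with
  | _ a ih =>
    intro b ha hb
    rcases Nat.eq_zero_or_pos a with rfl | hpos
    · simpa using hb
    · rw [Nat.gcd_rec]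
      refine ih (b % a) (Nat.mod_lt _ hpos) a ?_ ha
      have h1 : y ^ Q ^ (a * (b / a)) = y := pow_q_mul ha _
      have h2 : Q ^ (a * (b / a)) * Q ^ (b % a) = Q ^ b := by
        rw [← pow_add, Nat.div_add_mod]
      calc y ^ Q ^ (b % a) = (y ^ Q ^ (a * (b / a))) ^ Q ^ (b % a) := by rw [h1]
        _ = y ^ Q ^ b := by rw [← pow_mul, h2]
        _ = y := hb

private lemma charP_of_card {K : Type*} [Field K] [Fintype K] {p n : ℕ} (hp : p.Prime)
    (hn : n ≠ 0) (h : Fintype.card K = p ^ n) : CharP K p := by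
  haveI : CharP K (ringChar K) := ringChar.charP K
  obtain ⟨m, hr, hcard⟩ := FiniteField.card K (ringChar K)
  have hdvd : p ∣ ringChar K ^ (m : ℕ) := by
    rw [← hcard, h]; exact dvd_pow_self p hn
  have hpr : p = ringChar K := (Nat.prime_dvd_prime_iff_eq hp hr).mp (hp.dvd_of_dvd_pow hdvd)
  rw [hpr]; exact ringChar.charP K

private lemma smul_pow_q {F K : Type*} [Field F] [Field K] [Algebra F K] [Fintype F]
    (c : F) (x : K) (j : ℕ) :
    (c • x) ^ (Fintype.card F) ^ j = c • x ^ (Fintype.card F) ^ j := by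
  rw [Algebra.smul_def, Algebra.smul_def, mul_pow, ← map_pow, FiniteField.pow_card_pow]

private lemma key_dvd (q t : ℕ) (hq : IsPrimePow q) (ht : 1 ≤ t)
    (F K : Type*) [Field F] [Field K] [Algebra F K] [Fintype F] [Fintype K]
    (hF : Fintype.card F = q) (hK : Fintype.card K = q ^ t) (y : K) (m : ℕ) :
    y ^ q ^ m = y ↔ Module.finrank F (Algebra.adjoin F ({y} : Set K)) ∣ m := by
  classical
  obtain ⟨p, e, hp, he, rfl⟩ := hq
  have hp' : p.Prime := hp.nat_prime
  haveI : Fact p.Prime := ⟨hp'⟩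
  haveI : CharP K p := by
    refine charP_of_card hp' (n := e * t) (by positivity) ?_
    rw [hK, ← pow_mul]
  -- basic setup
  have hyint : IsIntegral F y := IsIntegral.of_finite F y
  have hEL : (F⟮y⟯ : IntermediateField F K).toSubalgebra = Algebra.adjoin F ({y} : Set K) :=
    IntermediateField.adjoin_simple_toSubalgebra_of_isAlgebraic hyint.isAlgebraic
  letI : Fintype (F⟮y⟯ : IntermediateField F K) := Fintype.ofFinite _
  have hd_eq : Module.finrank F (Algebra.adjoin F ({y} : Set K)) =
      Module.finrank F (F⟮y⟯ : IntermediateField F K) := by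
    rw [← hEL]; rfl
  set d := Module.finrank F (Algebra.adjoin F ({y} : Set K)) with hd
  have hcardL : Fintype.card (F⟮y⟯ : IntermediateField F K) = (p ^ e) ^ d := by
    rw [hd_eq, ← hF]; exact Module.card_eq_pow_finrank
  have hyd : y ^ (p ^ e) ^ d = y := by
    have hz := FiniteField.pow_card (⟨y, IntermediateField.mem_adjoin_simple_self F y⟩ :
      (F⟮y⟯ : IntermediateField F K))
    rw [hcardL] at hz
    have := congrArg (Subtype.val) hz
    simpa using this
  have hdpos : 0 < d := by
    rw [hd_eq]
    exact Module.finrank_pos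
  constructor
  · intro hm
    set g := Nat.gcd m d with hg_def
    have hg : y ^ (p ^ e) ^ g = y := pow_q_gcd m d hm hyd
    have hgd : g ∣ d := Nat.gcd_dvd_right m d
    have hgpos : 0 < g := Nat.pos_of_dvd_of_pos hgd hdpos
    -- the fixed points of x ↦ x ^ (p^e)^g form an F-subalgebra
    have hqg : ∀ x : K, iterateFrobenius K p (e * g) x = x ^ (p ^ e) ^ g := by
      intro x; rw [iterateFrobenius_def, ← pow_mul]
    have hcomm : ∀ (c : F) (x : K),
        iterateFrobenius K p (e * g) (c • x) = c • iterateFrobenius K p (e * g) x := by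
      intro c x
      rw [hqg, hqg, ← hF, smul_pow_q]
    let φ : K →ₐ[F] K := AlgHom.mk' (iterateFrobenius K p (e * g)) hcomm
    let S : Subalgebra F K := AlgHom.equalizer φ (AlgHom.id F K)
    have hyS : y ∈ S := by
      show iterateFrobenius K p (e * g) y = y
      rw [hqg]; exact hg
    have hle : Algebra.adjoin F ({y} : Set K) ≤ S :=
      Algebra.adjoin_le (Set.singleton_subset_iff.mpr hyS)
    -- root counting
    set n := (p ^ e) ^ g with hn_def
    have hegne : e * g ≠ 0 := by positivity
    have hn_eq : n = p ^ (e * g) := by rw [hn_def, ← pow_mul]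
    have hfne : ((X : K[X]) ^ n - X) ≠ 0 := by
      rw [hn_eq]
      exact FiniteField.X_pow_card_pow_sub_X_ne_zero K hegne hp'.one_lt
    have hfdeg : ((X : K[X]) ^ n - X).natDegree = n := by
      rw [hn_eq]
      exact FiniteField.X_pow_card_pow_sub_X_natDegree_eq K hegne hp'.one_lt
    have hmem : ∀ x : (F⟮y⟯ : IntermediateField F K),
        (x : K) ∈ ((X : K[X]) ^ n - X).roots.toFinset := by
      intro x
      rw [Multiset.mem_toFinset, mem_roots hfne]
      have hxadj : (x : K) ∈ Algebra.adjoin F ({y} : Set K) := by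
        rw [← hEL]; exact x.2
      have hxS : (x : K) ^ n = (x : K) := by
        have := hle hxadj
        have h2 : iterateFrobenius K p (e * g) (x : K) = (x : K) := this
        rwa [hqg] at h2
      simp [IsRoot, hxS, sub_eq_zero]
    have hinj : Function.Injective (fun x : (F⟮y⟯ : IntermediateField F K) =>
        (⟨(x : K), hmem x⟩ : {z : K // z ∈ ((X : K[X]) ^ n - X).roots.toFinset})) := by
      intro a b hab
      exact Subtype.ext (congrArg
        (fun z : {z : K // z ∈ ((X : K[X]) ^ n - X).roots.toFinset} => z.val) hab)
    have hcard_le : Fintype.card (F⟮y⟯ : IntermediateField F K) ≤ n := by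
      calc Fintype.card (F⟮y⟯ : IntermediateField F K)
          ≤ Fintype.card {z : K // z ∈ ((X : K[X]) ^ n - X).roots.toFinset} :=
            Fintype.card_le_of_injective _ hinj
        _ = ((X : K[X]) ^ n - X).roots.toFinset.card := Fintype.card_coe _
        _ ≤ Multiset.card ((X : K[X]) ^ n - X).roots := Multiset.toFinset_card_le _
        _ ≤ ((X : K[X]) ^ n - X).natDegree := Polynomial.card_roots' _
        _ = n := hfdeg
    rw [hcardL] at hcard_le
    have hq2 : 1 < p ^ e := Nat.one_lt_pow (by omega) hp'.one_lt
    have hdg : d ≤ g := by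
      exact (Nat.pow_le_pow_iff_right hq2).mp hcard_le
    have : g = d := Nat.le_antisymm (Nat.le_of_dvd hdpos hgd) hdg
    rw [← this]
    exact Nat.gcd_dvd_left m d
  · rintro ⟨k, rfl⟩
    exact pow_q_mul hyd k

theorem stmt10 (q t : ℕ) (hq : IsPrimePow q) (ht : 2 ≤ t)
    (F K : Type*) [Field F] [Field K] [Algebra F K] [Fintype F] [Fintype K]
    (hF : Fintype.card F = q) (hK : Fintype.card K = q ^ t)
    (y y' : K) (hy : y ∉ Set.range (algebraMap F K)) (hy' : y' ∉ Set.range (algebraMap F K))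
    (h h' : ℕ) (hh : h < t) (hh' : h' < t) :
    Submodule.span F {((y, y ^ q ^ h) : K × K)} =
      Submodule.span F {((y', y' ^ q ^ h') : K × K)} ↔
    (Submodule.span F ({y} : Set K) = Submodule.span F ({y'} : Set K) ∧
      (Module.finrank F (Algebra.adjoin F ({y} : Set K)) : ℤ) ∣ (h : ℤ) - (h' : ℤ)) := by
  obtain ⟨p, e, hp, he, hpe⟩ := hq
  have hp' : p.Prime := hp.nat_prime
  haveI : Fact p.Prime := ⟨hp'⟩
  haveI : CharP K p := by
    refine charP_of_card hp' (n := e * t) (by positivity) ?_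
    rw [hK, ← hpe, ← pow_mul]
  have hq' : IsPrimePow q := ⟨p, e, hp, he, hpe⟩
  have ht1 : 1 ≤ t := by omega
  -- injectivity of frobenius powers
  have hfrob_inj : ∀ (j : ℕ) (a b : K), a ^ q ^ j = b ^ q ^ j → a = b := by
    intro j a b hab
    apply (iterateFrobenius K p (e * j)).injective
    rw [iterateFrobenius_def, iterateFrobenius_def,
      show p ^ (e * j) = q ^ j by rw [← hpe, pow_mul], hab]
  -- shift lemma
  have hshift : ∀ a b : ℕ, b ≤ a → (y ^ q ^ a = y ^ q ^ b ↔ y ^ q ^ (a - b) = y) := by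
    intro a b hba
    constructor
    · intro hab
      apply hfrob_inj b
      rw [← pow_mul, ← pow_add]
      rwa [Nat.sub_add_cancel hba]
    · intro hr
      have := congrArg (fun z : K => z ^ q ^ b) hr
      rwa [← pow_mul, ← pow_add, Nat.sub_add_cancel hba] at this
  set d := Module.finrank F (Algebra.adjoin F ({y} : Set K)) with hd
  -- the key equivalence
  have hkey : y ^ q ^ h = y ^ q ^ h' ↔ (d : ℤ) ∣ (h : ℤ) - (h' : ℤ) := by
    rcases le_total h' h with hle | hle
    · rw [hshift h h' hle, key_dvd q t hq' ht1 F K hF hK y (h - h'),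
        ← Nat.cast_sub hle, Int.natCast_dvd_natCast]
    · rw [show (y ^ q ^ h = y ^ q ^ h') ↔ (y ^ q ^ h' = y ^ q ^ h) from eq_comm,
        hshift h' h hle, key_dvd q t hq' ht1 F K hF hK y (h' - h),
        show ((h : ℤ) - h') = -(((h' : ℤ) - h)) by ring, dvd_neg,
        ← Nat.cast_sub hle, Int.natCast_dvd_natCast]
  rw [Submodule.span_singleton_eq_span_singleton, Submodule.span_singleton_eq_span_singleton]
  constructor
  · rintro ⟨c, hc⟩
    rw [Units.smul_def, Prod.smul_mk, Prod.mk.injEq] at hc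
    obtain ⟨hc1, hc2⟩ := hc
    have hcy : (c : F) • y ^ q ^ h' = (c : F) • y ^ q ^ h := by
      have : ((c : F) • y) ^ q ^ h' = (c : F) • y ^ q ^ h' := by
        rw [← hF]; exact smul_pow_q _ _ _
      rw [← this, hc1, hc2]
    have hyy : y ^ q ^ h = y ^ q ^ h' := (smul_right_injective K c.isUnit.ne_zero hcy).symm
    refine ⟨⟨c, hc1⟩, hkey.mp hyy⟩
  · rintro ⟨⟨c, hc1⟩, hdvd⟩
    have hyy : y ^ q ^ h = y ^ q ^ h' := hkey.mpr hdvd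
    refine ⟨c, ?_⟩
    rw [Units.smul_def, Prod.smul_mk, Prod.mk.injEq]
    refine ⟨hc1, ?_⟩
    have : ((c : F) • y) ^ q ^ h' = (c : F) • y ^ q ^ h' := by
      rw [← hF]; exact smul_pow_q _ _ _
    rw [Units.smul_def] at hc1
    rw [← hc1, this, hyy]
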